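/- Let p be an odd prime, c and d positive integers, and e a natural number with e ≡ 1 (mod p). Let M be the group of functions from Fin d to ZMod(p^c) under pointwise addition, on which the symmetric group of permutations of Fin d acts by permuting coordinates. Let Z ⊆ M denote the set of constant functions, let M₀ = {x ∈ M : the sum of the coordinates of x is 0}, and let Z₀ = Z ∩ M₀. Fix a Sylow p-subgroup Q of the permutation group of Fin d, and let M₁ = {x ∈ M₀ : for every τ ∈ Q, the function x ∘ τ − x lies in Z₀}. Then {x ∈ M₁ : e • x − x ∈ Z₀} = {z + y : z ∈ Z₀, y ∈ M₁, e • y = y}, where e • x denotes scalar multiplication of x by e. -/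

import Mathlib

/-- The wreath-product lemma: in `M = (ZMod (p^c))^d` with the symmetric group permuting
coordinates and `σ` acting as multiplication by `e ≡ 1 (mod p)`, with `Z` the constant
vectors, `M₀` the augmentation kernel, `Z₀ = Z ∩ M₀`, `Q` a Sylow `p`-subgroup of the
symmetric group, and `M₁ = {x ∈ M₀ | [x, Q] ≤ Z₀}`, we have
`{x ∈ M₁ | [x, σ] ∈ Z₀} = Z₀ + C_{M₁}(σ)`. -/
theorem wreath_lemma
    (p : ℕ) (hp : p.Prime) (hodd : Odd p)
    (c d : ℕ) (hc : 0 < c) (hd : 0 < d)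
    (e : ℕ) (he : e ≡ 1 [MOD p])
    (Q : Sylow p (Equiv.Perm (Fin d))) :
    let M := Fin d → ZMod (p ^ c)
    let Z : Set M := {x | ∀ i j : Fin d, x i = x j}
    let M₀ : Set M := {x | ∑ i, x i = 0}
    let Z₀ : Set M := Z ∩ M₀
    let M₁ : Set M := {x | x ∈ M₀ ∧
      ∀ τ ∈ (Q : Subgroup (Equiv.Perm (Fin d))), (x ∘ τ) - x ∈ Z₀}
    {x | x ∈ M₁ ∧ e • x - x ∈ Z₀} =
      {w | ∃ z ∈ Z₀, ∃ y ∈ M₁, e • y = y ∧ w = z + y} := by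
  intro M Z M₀ Z₀ M₁
  haveI : Fact p.Prime := ⟨hp⟩
  haveI : NeZero (p ^ c) := ⟨pow_ne_zero c hp.ne_zero⟩
  set R := ZMod (p ^ c) with hR
  set f : R := (e : R) - 1 with hf
  -- pointwise formula for `e • v - v`
  have hsmul : ∀ (v : M) (i : Fin d), (e • v - v) i = f * v i := by
    intro v i
    rw [Pi.sub_apply, Pi.smul_apply, nsmul_eq_mul, hf, sub_mul, one_mul]
  -- `f * t = 0 → e • t = t`
  have hfix : ∀ t : R, f * t = 0 → e • t = t := by
    intro t ht
    have h : (e : R) * t - t = 0 := by rw [← ht, hf]; ring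
    rw [nsmul_eq_mul]
    exact sub_eq_zero.mp (by linear_combination h)
  ext x
  constructor
  · rintro ⟨⟨hx0, hx1⟩, hxC, hxS⟩
    have hx0' : ∑ i, x i = 0 := hx0
    have hconst : ∀ i j : Fin d, f * x i = f * x j := by
      intro i j
      have h : (e • x - x) i = (e • x - x) j := hxC i j
      rwa [hsmul, hsmul] at h
    -- set up arithmetic of d
    set m := d.factorization p with hm
    set N := p ^ m with hNdef
    set k := d / N with hkdef
    have hdk : N * k = d := Nat.ordProj_mul_ordCompl_eq_self d p
    have hkp : ¬ p ∣ k := Nat.not_dvd_ordCompl hp hd.ne'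
    have hN : 0 < N := pow_pos hp.pos m
    have hk0 : 0 < k := by
      rcases Nat.eq_zero_or_pos k with h | h
      · rw [h, mul_zero] at hdk; omega
      · exact h
    haveI : NeZero N := ⟨hN.ne'⟩
    -- the special permutation
    let E : Fin k × Fin N ≃ Fin d := finProdFinEquiv.trans (finCongr (by rw [mul_comm]; exact hdk))
    let π : Equiv.Perm (Fin k × Fin N) := (Equiv.refl (Fin k)).prodCongr (Equiv.addRight (1 : Fin N))
    let σ₀ : Equiv.Perm (Fin d) := E.permCongr π
    have hσ₀ : ∀ w : Fin k × Fin N, σ₀ (E w) = E (w.1, w.2 + 1) := by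
      intro w
      simp only [σ₀, Equiv.permCongr_apply, Equiv.symm_apply_apply]
      rfl
    open Fin.CommRing in
    have hσpow : ∀ (n : ℕ) (w : Fin k × Fin N), (σ₀ ^ n) (E w) = E (w.1, w.2 + (n : Fin N)) := by
      intro n
      induction n with
      | zero => intro w; simp
      | succ n ih =>
        intro w
        rw [pow_succ, Equiv.Perm.mul_apply, hσ₀ w, ih (w.1, w.2 + 1)]
        have hcast : ((n + 1 : ℕ) : Fin N) = (n : Fin N) + 1 := by push_cast; ring
        rw [hcast]
        congr 1
        ring
    open Fin.CommRing in
    have hσ₀N : σ₀ ^ N = 1 := by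
      refine Equiv.ext fun z => ?_
      have h := hσpow N (E.symm z)
      rw [Fin.natCast_self, add_zero] at h
      have hz : (σ₀ ^ N) z = z :=
        calc (σ₀ ^ N) z = (σ₀ ^ N) (E (E.symm z)) := by rw [E.apply_symm_apply]
          _ = E ((E.symm z).1, (E.symm z).2) := h
          _ = z := by rw [Prod.mk.eta, E.apply_symm_apply]
      simpa using hz
    -- σ₀ generates a p-group, hence lies in a conjugate of Q
    have horder : orderOf σ₀ ∣ p ^ m := orderOf_dvd_of_pow_eq_one hσ₀N
    obtain ⟨t, -, ht⟩ := (Nat.dvd_prime_pow hp).1 horder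
    have hPG : IsPGroup p (Subgroup.zpowers σ₀) :=
      IsPGroup.of_card (by rw [Nat.card_zpowers, ht])
    obtain ⟨Q', hQ'⟩ := hPG.exists_le_sylow
    obtain ⟨g, hg⟩ := MulAction.exists_smul_eq (Equiv.Perm (Fin d)) Q' Q
    have hσ₁mem : g * σ₀ * g⁻¹ ∈ (Q : Subgroup (Equiv.Perm (Fin d))) := by
      rw [← hg]
      have h := Subgroup.smul_mem_pointwise_smul σ₀ (MulAut.conj g) (Q' : Subgroup _)
        (hQ' (Subgroup.mem_zpowers σ₀))
      rw [Sylow.coe_subgroup_smul]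
      simpa [MulAut.smul_def, MulAut.conj_apply] using h
    set σ₁ := g * σ₀ * g⁻¹ with hσ₁def
    let F : Fin k × Fin N ≃ Fin d := E.trans g
    have hFdef : ∀ w, F w = g (E w) := fun w => rfl
    have hσ₁app : ∀ w : Fin k × Fin N, σ₁ (F w) = F (w.1, w.2 + 1) := by
      intro w
      rw [hFdef, hFdef, hσ₁def]
      rw [Equiv.Perm.mul_apply, Equiv.Perm.mul_apply, (Equiv.Perm.inv_eq_iff_eq.mpr rfl : g⁻¹ (g (E w)) = E w), hσ₀ w]
    -- use the M₁ hypothesis on σ₁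
    obtain ⟨hcZ, -⟩ := hx1 σ₁ hσ₁mem
    have hstepc : ∀ z w : Fin d, x (σ₁ z) - x z = x (σ₁ w) - x w := by
      intro z w
      have h : ((x ∘ σ₁) - x) z = ((x ∘ σ₁) - x) w := hcZ z w
      exact h
    -- basepoint
    let i0 : Fin k := ⟨0, hk0⟩
    let j0 : Fin N := ⟨0, hN⟩
    let z₀ : Fin d := F (i0, j0)
    have hstep : ∀ z, x (σ₁ z) = x z + (x (σ₁ z₀) - x z₀) := by
      intro z
      rw [← hstepc z z₀]; ring
    set cv : R := x (σ₁ z₀) - x z₀ with hcv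
    have hFval : ∀ (i : Fin k) (jv : ℕ) (hj : jv < N),
        x (F (i, ⟨jv, hj⟩)) = x (F (i, j0)) + jv • cv := by
      intro i jv
      induction jv with
      | zero => intro hj; simp [j0]
      | succ n ih =>
        intro hj
        have hn : n < N := by omega
        have h1 : (⟨n, hn⟩ : Fin N) + 1 = ⟨n + 1, hj⟩ := by
          apply Fin.ext
          simp only [Fin.val_add, Fin.val_one']
          rw [Nat.mod_eq_of_lt (show 1 < N by omega), Nat.mod_eq_of_lt hj]
        have h2 := hσ₁app (i, ⟨n, hn⟩)
        simp only [h1] at h2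
        rw [← h2, hstep, ih hn, succ_nsmul]
        ring
    -- Gauss sum
    set Gn : ℕ := ∑ j : Fin N, (j : ℕ) with hGndef
    have hGn : 2 * Gn = N * (N - 1) := by
      rw [hGndef, Fin.sum_univ_eq_sum_range (fun j => j) N, mul_comm]
      exact Finset.sum_range_id_mul_two N
    -- row sums
    set S : R := ∑ i : Fin k, x (F (i, j0)) with hS
    have hrow : ∀ i : Fin k, ∑ j : Fin N, x (F (i, j)) = N • x (F (i, j0)) + Gn • cv := by
      intro i
      have hterm : ∀ j : Fin N, x (F (i, j)) = x (F (i, j0)) + (j : ℕ) • cv := by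
        intro j
        have h := hFval i j.val j.isLt
        simpa using h
      rw [Finset.sum_congr rfl fun j _ => hterm j, Finset.sum_add_distrib,
        Finset.sum_const, Finset.card_univ, Fintype.card_fin, ← Finset.sum_smul]
    have htot : (N : R) * S + (k : R) * (Gn : R) * cv = 0 := by
      have h : ∑ w : Fin k × Fin N, x (F w) = 0 := by
        rw [Equiv.sum_comp F x]; exact hx0'
      rw [Fintype.sum_prod_type] at h
      rw [Finset.sum_congr rfl fun i _ => hrow i, Finset.sum_add_distrib,
        Finset.sum_const, Finset.card_univ, Fintype.card_fin, ← Finset.smul_sum] at h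
      rw [← hS] at h
      calc (N : R) * S + (k : R) * (Gn : R) * cv
          = (N • S + k • Gn • cv : R) := by
            rw [smul_smul, nsmul_eq_mul, nsmul_eq_mul, Nat.cast_mul]
        _ = 0 := h
    -- invertibility of 2 and k
    have hi2ex : ∃ i2 : R, 2 * i2 = 1 := by
      have hcop : Nat.Coprime 2 (p ^ c) :=
        (Nat.coprime_two_left.mpr hodd).pow_right c
      have hu : IsUnit (2 : R) := by
        have h := (ZMod.isUnit_iff_coprime 2 (p ^ c)).2 hcop
        simpa using h
      obtain ⟨u, hu'⟩ := hu
      exact ⟨↑u⁻¹, by rw [← hu']; exact_mod_cast u.mul_inv⟩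
    obtain ⟨i2, hi2⟩ := hi2ex
    have hikex : ∃ ik : R, (k : R) * ik = 1 := by
      have hcop : Nat.Coprime k (p ^ c) :=
        (((Nat.Prime.coprime_iff_not_dvd hp).2 hkp).symm).pow_right c
      have hu : IsUnit ((k : ℕ) : R) := (ZMod.isUnit_iff_coprime k (p ^ c)).2 hcop
      obtain ⟨u, hu'⟩ := hu
      exact ⟨↑u⁻¹, by rw [← hu']; exact_mod_cast u.mul_inv⟩
    obtain ⟨ik, hik⟩ := hikex
    -- annihilator facts
    have hfc : f * cv = 0 := by
      rw [hcv, mul_sub, hconst (σ₁ z₀) z₀, sub_self]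
    have hfS : f * S = (k : R) * (f * x z₀) := by
      rw [hS, Finset.mul_sum]
      rw [Finset.sum_congr rfl fun i _ => hconst (F (i, j0)) z₀]
      rw [Finset.sum_const, Finset.card_univ, Fintype.card_fin, nsmul_eq_mul]
    -- Gauss identity in R
    have h2G : (2 : R) * (Gn : R) = (N : R) * ((N : R) - 1) := by
      have h := congrArg (Nat.cast : ℕ → R) hGn
      push_cast [Nat.cast_sub (show 1 ≤ N from hN)] at h
      rw [Nat.cast_sub (show 1 ≤ N from hN), Nat.cast_one] at h
      exact h
    -- final algebra
    set w₁ : R := S - (k : R) * x z₀ with hw₁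
    have hfw₁ : f * w₁ = 0 := by rw [hw₁, mul_sub, hfS]; ring
    set w₂ : R := (k : R) * i2 * ((N : R) - 1) * cv with hw₂
    have hfw₂ : f * w₂ = 0 := by
      rw [hw₂]; linear_combination ((k : R) * i2 * ((N : R) - 1)) * hfc
    have hNw₂ : (k : R) * (Gn : R) * cv = (N : R) * w₂ := by
      rw [hw₂]
      linear_combination ((k : R) * i2 * cv) * h2G - ((k : R) * (Gn : R) * cv) * hi2
    have hdβ : (N : R) * (k : R) * x z₀ = -(N : R) * (w₁ + w₂) := by
      linear_combination htot + (N : R) * hw₁ - hNw₂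
    set b : R := x z₀ + ik * (w₁ + w₂) with hb
    have hdcast : (d : R) = (N : R) * (k : R) := by rw [← hdk]; exact Nat.cast_mul N k
    have hdb : (d : R) * b = 0 := by
      rw [hdcast, hb]
      linear_combination hdβ + ((N : R) * (w₁ + w₂)) * hik
    have hfb : f * b = f * x z₀ := by
      rw [hb]
      linear_combination ik * hfw₁ + ik * hfw₂
    -- assemble the decomposition
    refine ⟨(fun _ => b : M), ⟨fun i j => rfl, ?_⟩, x - (fun _ => b : M), ⟨?_, ?_⟩, ?_, ?_⟩
    · show ∑ _i : Fin d, b = 0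
      rw [Finset.sum_const, Finset.card_univ, Fintype.card_fin, nsmul_eq_mul]
      exact hdb
    · show ∑ i : Fin d, (x i - b) = 0
      rw [Finset.sum_sub_distrib, hx0', Finset.sum_const, Finset.card_univ,
        Fintype.card_fin, nsmul_eq_mul, hdb, sub_zero]
    · intro τ hτ
      have heq : ((x - (fun _ => b : M)) ∘ τ) - (x - (fun _ => b : M)) = (x ∘ τ) - x := by
        funext i
        show (x (τ i) - b) - (x i - b) = x (τ i) - x i
        ring
      rw [heq]
      exact hx1 τ hτ
    · funext i
      show e • ((x - (fun _ => b : M)) i) = (x - (fun _ => b : M)) i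
      apply hfix
      show f * (x i - b) = 0
      rw [mul_sub, hfb, hconst i z₀, sub_self]
    · funext i
      show x i = b + (x i - b)
      ring
  · rintro ⟨z, hz, y, hy, hye, rfl⟩
    obtain ⟨hzZ, hz0⟩ := hz
    obtain ⟨hy0, hy1⟩ := hy
    have hzZ' : ∀ i j : Fin d, z i = z j := hzZ
    have hz0' : ∑ i, z i = 0 := hz0
    have hy0' : ∑ i, y i = 0 := hy0
    have hfy : ∀ i, f * y i = 0 := by
      intro i
      have h := hsmul y i
      rw [hye, sub_self] at h
      exact h.symm
    have h1 : ∀ i, (e • (z + y) - (z + y)) i = f * z i := by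
      intro i
      rw [hsmul]
      show f * (z i + y i) = f * z i
      rw [mul_add, hfy i, add_zero]
    refine ⟨⟨?_, ?_⟩, ?_, ?_⟩
    · show ∑ i : Fin d, (z i + y i) = 0
      rw [Finset.sum_add_distrib, hz0', hy0', add_zero]
    · intro τ hτ
      have heq : ((z + y) ∘ τ) - (z + y) = (y ∘ τ) - y := by
        funext i
        show (z (τ i) + y (τ i)) - (z i + y i) = y (τ i) - y i
        rw [hzZ' (τ i) i]
        ring
      show ((z + y) ∘ τ) - (z + y) ∈ Z₀
      rw [heq]
      exact hy1 τ hτ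
    · show ∀ i j : Fin d, (e • (z + y) - (z + y)) i = (e • (z + y) - (z + y)) j
      intro i j
      rw [h1 i, h1 j, hzZ' i j]
    · show ∑ i : Fin d, (e • (z + y) - (z + y)) i = 0
      rw [Finset.sum_congr rfl fun i _ => h1 i, ← Finset.mul_sum, hz0', mul_zero]
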